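/- Let p, q, r be pairwise coprime positive integers and for an integer k let F_k be the unique integer such that k + F_k·pqr = a·qr + b·rp + c·pq with 0 ≤ a < p, 0 ≤ b < q, 0 ≤ c < r. If -(qr + rp + pq) < k < pqr, then F_k ∈ {0, 1, 2}. -/
import Mathlib

/-- If `k + F·pqr = a·qr + b·rp + c·pq` with `0 ≤ a < p`, `0 ≤ b < q`, `0 ≤ c < r`,
and `-(qr+rp+pq) < k < pqr`, then `F ∈ {0,1,2}`. -/
theorem stmt4 (p q r : ℤ) (hp : 0 < p) (hq : 0 < q) (hr : 0 < r)
    (hpq : IsCoprime p q) (hqr : IsCoprime q r) (hrp : IsCoprime r p)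
    (k F a b c : ℤ)
    (ha : 0 ≤ a ∧ a < p) (hb : 0 ≤ b ∧ b < q) (hc : 0 ≤ c ∧ c < r)
    (heq : k + F * (p * q * r) = a * (q * r) + b * (r * p) + c * (p * q))
    (hk1 : -(q * r + r * p + p * q) < k) (hk2 : k < p * q * r) :
    F = 0 ∨ F = 1 ∨ F = 2 := by
  obtain ⟨ha0, ha1⟩ := ha
  obtain ⟨hb0, hb1⟩ := hb
  obtain ⟨hc0, hc1⟩ := hc
  have hpqr : 0 < p * q * r := by positivity
  have e1 : a * (q * r) ≤ (p - 1) * (q * r) := by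
    have : 0 ≤ q * r := by positivity
    exact mul_le_mul_of_nonneg_right (by omega) this
  have e2 : b * (r * p) ≤ (q - 1) * (r * p) := by
    have : 0 ≤ r * p := by positivity
    exact mul_le_mul_of_nonneg_right (by omega) this
  have e3 : c * (p * q) ≤ (r - 1) * (p * q) := by
    have : 0 ≤ p * q := by positivity
    exact mul_le_mul_of_nonneg_right (by omega) this
  have e4 : 0 ≤ a * (q * r) := by positivity
  have e5 : 0 ≤ b * (r * p) := by positivity
  have e6 : 0 ≤ c * (p * q) := by positivity
  have h1 : F * (p * q * r) < 3 * (p * q * r) := by nlinarith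
  have h2 : -(p * q * r) < F * (p * q * r) := by nlinarith
  have hF1 : F < 3 := by
    by_contra h
    push_neg at h
    nlinarith
  have hF2 : -1 < F := by
    by_contra h
    push_neg at h
    nlinarith
  omega
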